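/- Let n ≥ 2 be an integer. A finite simple graph G has a spanning subgraph each of whose components is a star K_{1,i} with 1 ≤ i ≤ n if and only if iso(G−S) ≤ n·|S| for every subset S of V(G). -/
import Mathlib


open Finset

namespace SCF

variable {V : Type*}

/-- Degree of `v` in `F` (as the cardinality of its neighbor set). -/
noncomputable def deg [Fintype V] (F : SimpleGraph V) (v : V) : ℕ :=
  (F.neighborSet v).ncard

/-- Number of isolated vertices of `G - S`. -/
noncomputable def iso [Fintype V] (G : SimpleGraph V) (S : Set V) : ℕ :=
  {v | v ∉ S ∧ ∀ w, G.Adj v w → w ∈ S}.ncard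

/-- The component of `v` in `F` is a single edge `K_{1,1}`. -/
def IsK11Comp [Fintype V] (F : SimpleGraph V) (v : V) : Prop :=
  deg F v = 1 ∧ ∀ w, F.Adj v w → deg F w = 1

/-- The component of `v` in `F` is a path on three vertices `K_{1,2}`. -/
def IsK12Comp [Fintype V] (F : SimpleGraph V) (v : V) : Prop :=
  ∃ c a b, a ≠ b ∧ F.Adj c a ∧ F.Adj c b ∧ deg F c = 2 ∧ deg F a = 1 ∧ deg F b = 1 ∧
    (v = c ∨ v = a ∨ v = b)

/-- The component of `v` in `F` is a cycle (2-regular connected, so length ≥ 3). -/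
def IsCycleComp [Fintype V] (F : SimpleGraph V) (v : V) : Prop :=
  ∀ w, F.Reachable v w → deg F w = 2

/-- The component of `v` in `F` is an odd cycle. -/
def IsOddCycleComp [Fintype V] (F : SimpleGraph V) (v : V) : Prop :=
  IsCycleComp F v ∧ Odd {w | F.Reachable v w}.ncard

/-- The component of `v` in `F` is a star `K_{1,i}` for some `i ≥ 1`. -/
def IsStarComp [Fintype V] (F : SimpleGraph V) (v : V) : Prop :=
  ∃ c, (v = c ∨ F.Adj c v) ∧ 0 < deg F c ∧ ∀ w, F.Adj c w → deg F w = 1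

/-- The component of `v` in `F` is a star `K_{1,i}` with `1 ≤ i ≤ n`. -/
def IsStarAtMostComp [Fintype V] (F : SimpleGraph V) (n : ℕ) (v : V) : Prop :=
  ∃ c, (v = c ∨ F.Adj c v) ∧ 0 < deg F c ∧ deg F c ≤ n ∧ ∀ w, F.Adj c w → deg F w = 1

/-- `F` is a `{K_{1,1}, C_m : m ≥ 3}`-factor of `G`. -/
def IsK11CycleFactor [Fintype V] (G F : SimpleGraph V) : Prop :=
  F ≤ G ∧ ∀ v, IsK11Comp F v ∨ IsCycleComp F v

/-- `F` is a `{K_{1,1}, K_{1,2}, C_m : m ≥ 3}`-factor of `G`. -/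
def IsK11K12CycleFactor [Fintype V] (G F : SimpleGraph V) : Prop :=
  F ≤ G ∧ ∀ v, IsK11Comp F v ∨ IsK12Comp F v ∨ IsCycleComp F v

/-- Number of `K_{1,2}`-components of `F`, counted by their centers. -/
noncomputable def countK12 [Fintype V] (F : SimpleGraph V) : ℕ :=
  {v | deg F v = 2 ∧ ∀ w, F.Adj v w → deg F w = 1}.ncard

/-- `min(G, K_{1,2})`: the minimum number of `K_{1,2}`-components over all
`{K_{1,1}, K_{1,2}, C_m : m ≥ 3}`-factors of `G`. -/
noncomputable def minK12 [Fintype V] (G : SimpleGraph V) : ℕ :=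
  sInf {t | ∃ F, IsK11K12CycleFactor G F ∧ countK12 F = t}

/-- `f` is a fractional matching of `G`. -/
def IsFracMatching [Fintype V] [DecidableEq V] (G : SimpleGraph V) [DecidableRel G.Adj]
    (f : Sym2 V → ℝ) : Prop :=
  (∀ e, 0 ≤ f e ∧ f e ≤ 1) ∧ (∀ e, e ∉ G.edgeSet → f e = 0) ∧
    ∀ v : V, ∑ e ∈ G.edgeFinset, (if v ∈ e then f e else 0) ≤ 1

/-- Total weight of a fractional matching. -/
def weight [Fintype V] [DecidableEq V] (G : SimpleGraph V) [DecidableRel G.Adj]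
    (f : Sym2 V → ℝ) : ℝ :=
  ∑ e ∈ G.edgeFinset, f e

/-- The fractional matching number `μ_f(G)`. -/
noncomputable def nuF [Fintype V] [DecidableEq V] (G : SimpleGraph V) [DecidableRel G.Adj] : ℝ :=
  sSup (weight G '' {f | IsFracMatching G f})

/-- `f` is a maximum fractional matching of `G`. -/
def IsMaxFracMatching [Fintype V] [DecidableEq V] (G : SimpleGraph V) [DecidableRel G.Adj]
    (f : Sym2 V → ℝ) : Prop :=
  IsFracMatching G f ∧ weight G f = nuF G

/-- `s` is an independent set of vertices of `G`. -/
def IsIndepSet (G : SimpleGraph V) (s : Set V) : Prop :=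
  ∀ ⦃u⦄, u ∈ s → ∀ ⦃w⦄, w ∈ s → ¬ G.Adj u w

/-- The independence number `α(G)`. -/
noncomputable def alpha [Fintype V] (G : SimpleGraph V) : ℕ :=
  sSup {n | ∃ s : Set V, IsIndepSet G s ∧ s.ncard = n}

/-- `G` has a proper edge coloring with `k` colors. -/
def HasProperEdgeColoring (G : SimpleGraph V) (k : ℕ) : Prop :=
  ∃ c : Sym2 V → Fin k, ∀ e₁ ∈ G.edgeSet, ∀ e₂ ∈ G.edgeSet,
    e₁ ≠ e₂ → ∀ v : V, v ∈ e₁ → v ∈ e₂ → c e₁ ≠ c e₂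

/-- The chromatic index `χ'(G)`: the minimum number of colors (equivalently matchings)
needed to properly color the edges of `G`. -/
noncomputable def chromIdx (G : SimpleGraph V) : ℕ :=
  sInf {k | HasProperEdgeColoring G k}

/-- `G` is a `k`-critical graph. -/
def IsCriticalWith [Fintype V] (G : SimpleGraph V) [DecidableRel G.Adj] (k : ℕ) : Prop :=
  2 ≤ k ∧ G.maxDegree = k ∧ chromIdx G = k + 1 ∧
    ∀ H : SimpleGraph V, H < G → chromIdx H ≤ k

/-- `G` is an edge-chromatic critical graph. -/
def IsCritical [Fintype V] (G : SimpleGraph V) [DecidableRel G.Adj] : Prop :=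
  ∃ k, IsCriticalWith G k

/-- `G` is factor-critical: deleting any vertex leaves a graph with a perfect matching. -/
def IsFactorCritical (G : SimpleGraph V) : Prop :=
  ∀ v : V, ∃ M : G.Subgraph, M.verts = {v}ᶜ ∧ M.IsMatching

end SCF

open SCF


set_option linter.unusedSectionVars false
set_option linter.unusedVariables false
set_option maxHeartbeats 1000000

namespace StarFactorProof

variable {V : Type*} [Fintype V] [DecidableEq V]

def fib (f : V → V) (c : V) : Finset V :=
  Finset.univ.filter (fun u => f u = c ∧ u ≠ c)

lemma mem_fib {f : V → V} {c u : V} : u ∈ fib f c ↔ f u = c ∧ u ≠ c := by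
  simp [fib]

variable (G : SimpleGraph V)

def Good (f : V → V) : Prop :=
  ∀ v, f (f v) = f v ∧ (f v ≠ v → G.Adj v (f v)) ∧ (f v = v → ∃ u, f u = v ∧ u ≠ v)

variable {G}

lemma Good.idem {f : V → V} (h : Good G f) (v : V) : f (f v) = f v := (h v).1

lemma Good.adj {f : V → V} (h : Good G f) {v : V} (hv : f v ≠ v) : G.Adj v (f v) :=
  (h v).2.1 hv

lemma Good.center_of_mem_fib {f : V → V} (h : Good G f) {c u : V} (hu : u ∈ fib f c) :
    f c = c := by
  rw [mem_fib] at hu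
  have := h.idem u
  rw [hu.1] at this; exact this

lemma Good.fib_of_leaf {f : V → V} (h : Good G f) {w : V} (hw : f w ≠ w) :
    fib f w = ∅ := by
  ext u
  simp only [mem_fib, Finset.notMem_empty, iff_false]
  rintro ⟨h1, -⟩
  exact hw (by rw [← h1]; exact h.idem u)

lemma Good.ne_leaf_of_center {f : V → V} (h : Good G f) {v w : V} (hfv : f v = v)
    (hw : f w ≠ w) : v ≠ w := fun he => hw (he ▸ hfv)

lemma fib_disjoint {f : V → V} {c c' : V} (h : c ≠ c') : Disjoint (fib f c) (fib f c') := by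
  rw [Finset.disjoint_left]
  intro u hu hu'
  rw [mem_fib] at hu hu'
  exact h (hu.1 ▸ hu'.1 ▸ rfl)

def excess (n : ℕ) (f : V → V) : ℕ := ∑ c : V, ((fib f c).card - n)

open Classical in
noncomputable def isoF (G : SimpleGraph V) (S : Finset V) : Finset V :=
  Finset.univ.filter (fun v => v ∉ S ∧ ∀ u, G.Adj v u → u ∈ S)

lemma mem_isoF {S : Finset V} {v : V} :
    v ∈ isoF G S ↔ (v ∉ S ∧ ∀ u, G.Adj v u → u ∈ S) := by
  simp [isoF, Finset.mem_filter]

lemma fib_update (f : V → V) (a b v : V) :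
    fib (Function.update f a b) v =
      if v = b ∧ a ≠ b then insert a ((fib f v).erase a) else (fib f v).erase a := by
  ext u
  by_cases hua : u = a
  · subst hua
    simp only [mem_fib, Function.update_self]
    split_ifs with h
    · simp [h.1, h.2, Ne.symm h.2]
    · simp only [Finset.mem_erase, ne_eq, not_true_eq_false, false_and, iff_false]
      rintro ⟨rfl, hne⟩; exact h ⟨rfl, hne⟩
  · simp only [mem_fib, Function.update_of_ne hua]
    split_ifs with h
    · simp [Finset.mem_insert, Finset.mem_erase, hua, mem_fib]
    · simp [Finset.mem_erase, hua, mem_fib]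

/-- Op 1: move a leaf `x` of an overloaded center `a` to a center `w` with a small fiber. -/
lemma op1 {n : ℕ} (hn : 1 ≤ n) {f : V → V} (hg : Good G f) {a x w : V} (hx : x ∈ fib f a)
    (ha : n + 1 ≤ (fib f a).card) (hw : f w = w) (hcard : (fib f w).card < n)
    (hadj : G.Adj x w) : ∃ f', Good G f' ∧ excess n f' < excess n f := by
  obtain ⟨hfx, hxa⟩ := mem_fib.1 hx
  have hwa : w ≠ a := by
    intro h
    rw [h] at hcard
    omega
  have hxw : x ≠ w := by
    intro h
    rw [h] at hfx
    exact hwa (by rw [← hw, hfx])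
  set f' := Function.update f x w with hf'
  have e1 : f' x = w := Function.update_self _ _ _
  have e3 : ∀ y, y ≠ x → f' y = f y := fun y hy => Function.update_of_ne hy _ _
  have hfib : ∀ v, fib f' v =
      if v = w then insert x ((fib f v).erase x) else (fib f v).erase x := by
    intro v
    rw [hf', fib_update]
    by_cases h : v = w
    · simp [h, hxw]
    · simp [h]
  have hfvx : ∀ v, f v ≠ x := by
    intro v h
    have h2 := hg.idem v
    rw [h] at h2
    rw [hfx] at h2
    exact hxa h2.symm
  refine ⟨f', ⟨?_, ?_⟩⟩
  · intro v
    by_cases hvx : v = x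
    · rw [hvx, e1]
      refine ⟨by rw [e3 w hxw.symm, hw], fun _ => hadj, fun h => absurd h.symm hxw⟩
    · rw [e3 v hvx]
      obtain ⟨h1, h2, h3⟩ := hg v
      refine ⟨by rw [e3 _ (hfvx v)]; exact h1, h2, fun h => ?_⟩
      by_cases hva : v = a
      · -- pick another leaf of a
        have h5 : 0 < ((fib f a).erase x).card := by
          rw [Finset.card_erase_of_mem hx]
          omega
        obtain ⟨y, hy⟩ := Finset.card_pos.1 h5
        have hyx : y ≠ x := (Finset.mem_erase.1 hy).1
        have hym := Finset.mem_of_mem_erase hy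
        obtain ⟨hy1, hy2⟩ := mem_fib.1 hym
        exact ⟨y, by rw [e3 y hyx, hy1, hva], by rw [hva]; exact hy2⟩
      · obtain ⟨u', h5, h6⟩ := h3 h
        have hu'x : u' ≠ x := by
          intro hh
          rw [hh] at h5
          exact hva (by rw [← h5, hfx])
        exact ⟨u', by rw [e3 u' hu'x]; exact h5, h6⟩
  · apply Finset.sum_lt_sum
    · intro v _
      rw [hfib v]
      by_cases h : v = w
      · rw [if_pos h, h]
        have : ((fib f w).erase x).card ≤ (fib f w).card := Finset.card_le_card (Finset.erase_subset _ _)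
        have := Finset.card_insert_le x ((fib f w).erase x)
        omega
      · rw [if_neg h]
        have : ((fib f v).erase x).card ≤ (fib f v).card := Finset.card_le_card (Finset.erase_subset _ _)
        omega
    · refine ⟨a, Finset.mem_univ a, ?_⟩
      rw [hfib a, if_neg hwa.symm, Finset.card_erase_of_mem hx]
      omega

/-- Op 2: a leaf `x` (of center `b`) adjacent to a leaf `w` (of center `f w`):
make `w` a center with single leaf `x`. -/
lemma op2 {n : ℕ} (hn : 1 ≤ n) {f : V → V} (hg : Good G f) {b x w : V}
    (hx : x ∈ fib f b) (hw : f w ≠ w) (hadj : G.Adj x w) (hxw : x ≠ w)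
    (hbne : (((fib f b).erase x).erase w).Nonempty)
    (hdne : (((fib f (f w)).erase w).erase x).Nonempty)
    (hstrict : n + 1 ≤ (fib f b).card ∨ n + 1 ≤ (fib f (f w)).card) :
    ∃ f', Good G f' ∧ excess n f' < excess n f := by
  obtain ⟨hfx, hxb⟩ := mem_fib.1 hx
  have hbc : f b = b := hg.center_of_mem_fib hx
  have hdc : f (f w) = f w := hg.idem w
  have hdw : f w ≠ w := hw
  have hbw : b ≠ w := hg.ne_leaf_of_center hbc hw
  have hdw' : f w ≠ w := hw
  have hwd : w ∈ fib f (f w) := mem_fib.2 ⟨rfl, fun h => hw (h ▸ rfl)⟩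
  set f' := Function.update (Function.update f w w) x w with hf'
  have e1 : f' x = w := Function.update_self _ _ _
  have e2 : f' w = w := by
    rw [hf', Function.update_of_ne hxw.symm, Function.update_self]
  have e3 : ∀ y, y ≠ x → y ≠ w → f' y = f y := fun y h1 h2 => by
    rw [hf', Function.update_of_ne h1, Function.update_of_ne h2]
  have hfib : ∀ v, fib f' v = if v = w then insert x (((fib f v).erase w).erase x)
      else ((fib f v).erase w).erase x := by
    intro v
    rw [hf', fib_update, fib_update]
    simp only [ne_eq, not_true_eq_false, and_false, if_false]
    by_cases h : v = w
    · simp [h, hxw]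
    · simp [h]
  have hfibw : fib f' w = {x} := by
    rw [hfib w, if_pos rfl, hg.fib_of_leaf hw]
    simp
  have hfvx : ∀ v, f v ≠ x := by
    intro v h
    have h2 := hg.idem v
    rw [h] at h2
    rw [hfx] at h2
    exact hxb h2.symm
  have hfvw : ∀ v, f v ≠ w := by
    intro v h
    have h2 := hg.idem v
    rw [h] at h2
    exact hw h2
  refine ⟨f', ⟨?_, ?_⟩⟩
  · intro v
    by_cases hvx : v = x
    · rw [hvx, e1]
      exact ⟨by rw [e2], fun _ => hadj, fun h => absurd h.symm hxw⟩
    · by_cases hvw : v = w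
      · rw [hvw, e2]
        exact ⟨by rw [e2], fun h => absurd rfl h, fun _ => ⟨x, e1, hxw⟩⟩
      · rw [e3 v hvx hvw]
        obtain ⟨h1, h2, h3⟩ := hg v
        refine ⟨by rw [e3 _ (hfvx v) (hfvw v)]; exact h1, h2, fun h => ?_⟩
        by_cases hvb : v = b
        · obtain ⟨y, hy⟩ := hbne
          have hyw : y ≠ w := (Finset.mem_erase.1 hy).1
          have hyx : y ≠ x := (Finset.mem_erase.1 (Finset.mem_of_mem_erase hy)).1
          have hym := Finset.mem_of_mem_erase (Finset.mem_of_mem_erase hy)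
          obtain ⟨hy1, hy2⟩ := mem_fib.1 hym
          exact ⟨y, by rw [e3 y hyx hyw, hy1, hvb], by rw [hvb]; exact hy2⟩
        · by_cases hvd : v = f w
          · obtain ⟨y, hy⟩ := hdne
            have hyx : y ≠ x := (Finset.mem_erase.1 hy).1
            have hyw : y ≠ w := (Finset.mem_erase.1 (Finset.mem_of_mem_erase hy)).1
            have hym := Finset.mem_of_mem_erase (Finset.mem_of_mem_erase hy)
            obtain ⟨hy1, hy2⟩ := mem_fib.1 hym
            exact ⟨y, by rw [e3 y hyx hyw, hy1, hvd], by rw [hvd]; exact hy2⟩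
          · obtain ⟨u', h5, h6⟩ := h3 h
            have hu'x : u' ≠ x := by
              intro hh
              rw [hh] at h5
              exact hvb (by rw [← h5, hfx])
            have hu'w : u' ≠ w := by
              intro hh
              rw [hh] at h5
              exact hvd h5.symm
            exact ⟨u', by rw [e3 u' hu'x hu'w]; exact h5, h6⟩
  · apply Finset.sum_lt_sum
    · intro v _
      rw [hfib v]
      by_cases h : v = w
      · rw [if_pos h, h, hg.fib_of_leaf hw]
        simp only [Finset.erase_empty]
        have hc : (insert x (∅ : Finset V)).card = 1 := by simp
        rw [hc]
        simp only [Finset.card_empty]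
        omega
      · rw [if_neg h]
        have : (((fib f v).erase w).erase x).card ≤ (fib f v).card :=
          Finset.card_le_card ((Finset.erase_subset _ _).trans (Finset.erase_subset _ _))
        omega
    · rcases hstrict with hs | hs
      · refine ⟨b, Finset.mem_univ b, ?_⟩
        rw [hfib b, if_neg hbw]
        have hxm : x ∈ (fib f b).erase w := Finset.mem_erase.2 ⟨hxw, hx⟩
        rw [Finset.card_erase_of_mem hxm]
        have : ((fib f b).erase w).card ≤ (fib f b).card :=
          Finset.card_le_card (Finset.erase_subset _ _)
        omega
      · refine ⟨f w, Finset.mem_univ _, ?_⟩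
        rw [hfib (f w), if_neg hw]
        have h1 : ((fib f (f w)).erase w).card = (fib f (f w)).card - 1 :=
          Finset.card_erase_of_mem hwd
        have h2 : (((fib f (f w)).erase w).erase x).card ≤ ((fib f (f w)).erase w).card :=
          Finset.card_le_card (Finset.erase_subset _ _)
        omega

/-- Op 3: a leaf `x` of an overloaded center `b` adjacent to a leaf `w` whose center
has only the leaf `w`: rewire `{f w, w}` into a star centered at `w` with leaves `f w, x`. -/
lemma op3 {n : ℕ} (hn : 2 ≤ n) {f : V → V} (hg : Good G f) {b x w : V}
    (hx : x ∈ fib f b) (hw : f w ≠ w) (hadj : G.Adj x w) (hxw : x ≠ w)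
    (hb : n + 1 ≤ (fib f b).card) (hsing : fib f (f w) = {w}) :
    ∃ f', Good G f' ∧ excess n f' < excess n f := by
  obtain ⟨hfx, hxb⟩ := mem_fib.1 hx
  have hbc : f b = b := hg.center_of_mem_fib hx
  have hdc : f (f w) = f w := hg.idem w
  have hbw : b ≠ w := hg.ne_leaf_of_center hbc hw
  have hdw : f w ≠ w := hw
  have hdb : f w ≠ b := by
    intro h
    rw [← h, hsing] at hb
    simp at hb
    omega
  have hxd : x ≠ f w := fun h => hxb (by rw [← hfx, h, hdc])
  have hadjwd : G.Adj w (f w) := hg.adj hw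
  set f' := Function.update (Function.update (Function.update f (f w) w) w w) x w with hf'
  have e1 : f' x = w := Function.update_self _ _ _
  have e2 : f' w = w := by
    rw [hf', Function.update_of_ne hxw.symm, Function.update_self]
  have e4 : f' (f w) = w := by
    rw [hf', Function.update_of_ne (fun h => hxd h.symm), Function.update_of_ne hdw,
      Function.update_self]
  have e3 : ∀ y, y ≠ x → y ≠ w → y ≠ f w → f' y = f y := fun y h1 h2 h3 => by
    rw [hf', Function.update_of_ne h1, Function.update_of_ne h2, Function.update_of_ne h3]
  have hfib : ∀ v, v ≠ w → fib f' v = (((fib f v).erase (f w)).erase w).erase x := by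
    intro v hv
    rw [hf', fib_update, fib_update, fib_update]
    rw [if_neg (fun h : v = w ∧ x ≠ w => hv h.1)]
    rw [if_neg (by simp)]
    rw [if_neg (fun h : v = w ∧ f w ≠ w => hv h.1)]
  have hA : fib (Function.update f (f w) w) w = {f w} := by
    rw [fib_update, if_pos ⟨rfl, hdw⟩, hg.fib_of_leaf hw]
    simp
  have hB : fib (Function.update (Function.update f (f w) w) w w) w = {f w} := by
    rw [fib_update]
    rw [if_neg (by simp)]
    rw [hA, Finset.erase_eq_of_notMem (Finset.notMem_singleton.2 (Ne.symm hdw))]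
  have hfibw : fib f' w = insert x {f w} := by
    rw [hf', fib_update, if_pos ⟨rfl, hxw⟩, hB,
      Finset.erase_eq_of_notMem (Finset.notMem_singleton.2 hxd)]
  have hcardw : (fib f' w).card = 2 := by
    rw [hfibw, Finset.card_insert_of_notMem (Finset.notMem_singleton.2 hxd),
      Finset.card_singleton]
  have hfvx : ∀ v, f v ≠ x := by
    intro v h
    have h2 := hg.idem v
    rw [h] at h2
    rw [hfx] at h2
    exact hxb h2.symm
  have hfvw : ∀ v, f v ≠ w := by
    intro v h
    have h2 := hg.idem v
    rw [h] at h2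
    exact hw h2
  refine ⟨f', ⟨?_, ?_⟩⟩
  · intro v
    by_cases hvx : v = x
    · rw [hvx, e1]
      exact ⟨by rw [e2], fun _ => hadj, fun h => absurd h.symm hxw⟩
    · by_cases hvw : v = w
      · rw [hvw, e2]
        exact ⟨by rw [e2], fun h => absurd rfl h, fun _ => ⟨x, e1, hxw⟩⟩
      · by_cases hvd : v = f w
        · rw [hvd, e4]
          exact ⟨by rw [e2], fun _ => hadjwd.symm, fun h => absurd h.symm hdw⟩
        · rw [e3 v hvx hvw hvd]
          obtain ⟨h1, h2, h3⟩ := hg v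
          have hfvd : f v ≠ f w := by
            intro h
            by_cases hvv : f v = v
            · exact hvd (by rw [← hvv, h])
            · have : v ∈ fib f (f w) := mem_fib.2 ⟨h, hvd⟩
              rw [hsing] at this
              simp at this
              exact hvw this
          refine ⟨by rw [e3 _ (hfvx v) (hfvw v) hfvd]; exact h1, h2, fun h => ?_⟩
          by_cases hvb : v = b
          · have h5 : 0 < ((fib f b).erase x).card := by
              rw [Finset.card_erase_of_mem hx]
              omega
            obtain ⟨y, hy⟩ := Finset.card_pos.1 h5
            have hyx : y ≠ x := (Finset.mem_erase.1 hy).1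
            have hym := Finset.mem_of_mem_erase hy
            obtain ⟨hy1, hy2⟩ := mem_fib.1 hym
            have hyw : y ≠ w := by
              intro hh
              rw [hh] at hy1
              exact hdb hy1
            have hyd : y ≠ f w := by
              intro hh
              rw [hh] at hy1
              rw [hdc] at hy1
              exact hdb hy1
            exact ⟨y, by rw [e3 y hyx hyw hyd, hy1, hvb], by rw [hvb]; exact hy2⟩
          · obtain ⟨u', h5, h6⟩ := h3 h
            have hu'x : u' ≠ x := by
              intro hh
              rw [hh] at h5
              exact hvb (by rw [← h5, hfx])
            have hu'w : u' ≠ w := by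
              intro hh
              rw [hh] at h5
              exact hvd h5.symm
            have hu'd : u' ≠ f w := by
              intro hh
              rw [hh] at h5
              rw [hdc] at h5
              exact hvd h5.symm
            exact ⟨u', by rw [e3 u' hu'x hu'w hu'd]; exact h5, h6⟩
  · apply Finset.sum_lt_sum
    · intro v _
      by_cases h : v = w
      · rw [h, hcardw, hg.fib_of_leaf hw]
        simp only [Finset.card_empty]
        omega
      · rw [hfib v h]
        have : ((((fib f v).erase (f w)).erase w).erase x).card ≤ (fib f v).card :=
          Finset.card_le_card (((Finset.erase_subset _ _).trans (Finset.erase_subset _ _)).trans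
            (Finset.erase_subset _ _))
        omega
    · refine ⟨b, Finset.mem_univ b, ?_⟩
      rw [hfib b hbw]
      have hxm : x ∈ ((fib f b).erase (f w)).erase w :=
        Finset.mem_erase.2 ⟨hxw, Finset.mem_erase.2 ⟨hxd, hx⟩⟩
      rw [Finset.card_erase_of_mem hxm]
      have h2 : (((fib f b).erase (f w)).erase w).card ≤ (fib f b).card :=
        Finset.card_le_card ((Finset.erase_subset _ _).trans (Finset.erase_subset _ _))
      omega

variable (G)

def GoodOn (D : Finset V) (f : V → V) : Prop :=
  (∀ v ∉ D, f v = v) ∧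
  ∀ v ∈ D, f v ∈ D ∧ f (f v) = f v ∧ (f v ≠ v → G.Adj v (f v)) ∧
    (f v = v → ∃ u ∈ D, f u = v ∧ u ≠ v)

variable {G}

lemma goodOn_step {D : Finset V} {f : V → V} (hf : GoodOn G D f) {u : V} (hu : u ∉ D)
    {w : V} (hw : G.Adj u w) :
    ∃ D' f', GoodOn G D' f' ∧ D ⊂ D' := by
  classical
  obtain ⟨hid, hf⟩ := hf
  have huw : u ≠ w := hw.ne
  have hwu : w ≠ u := huw.symm
  by_cases hwc : f w = w
  · -- w is a center or uncovered : attach u to w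
    set f' := Function.update f u w with hf'
    have e1 : f' u = w := Function.update_self _ _ _
    have e3 : ∀ x, x ≠ u → f' x = f x := fun x hx => Function.update_of_ne hx _ _
    have e2 : f' w = w := by rw [e3 w hwu, hwc]
    set D' := insert u (insert w D) with hD'
    have hsub : D ⊆ D' := (Finset.subset_insert _ _).trans (Finset.subset_insert _ _)
    refine ⟨D', f', ⟨?_, ?_⟩, Finset.ssubset_iff_of_subset hsub |>.2 ⟨u, by simp [hD'], hu⟩⟩
    · intro v hv
      simp only [hD', Finset.mem_insert, not_or] at hv
      rw [e3 v hv.1, hid v hv.2.2]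
    · intro v hv
      by_cases hvu : v = u
      · rw [hvu, e1]
        exact ⟨by simp [hD'], by rw [e2], fun _ => hw, fun h => absurd h.symm huw⟩
      · by_cases hvw : v = w
        · rw [hvw, e2]
          exact ⟨by simp [hD'], by rw [e2], fun h => absurd rfl h,
            fun _ => ⟨u, by simp [hD'], e1, huw⟩⟩
        · have hvD : v ∈ D := by
            simp only [hD', Finset.mem_insert] at hv
            tauto
          obtain ⟨h1, h2, h3, h4⟩ := hf v hvD
          have hfvu : f v ≠ u := fun h => hu (h ▸ h1)
          rw [e3 v hvu]
          refine ⟨hsub h1, by rw [e3 _ hfvu]; exact h2, h3, fun h => ?_⟩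
          obtain ⟨u', hu'D, h5, h6⟩ := h4 h
          have h7 : u' ≠ u := fun hh => hu (hh ▸ hu'D)
          exact ⟨u', hsub hu'D, by rw [e3 _ h7]; exact h5, h6⟩
  · -- w is a leaf of d := f w
    have hwD : w ∈ D := by
      by_contra h
      exact hwc (hid w h)
    obtain ⟨d, hd⟩ : ∃ d, f w = d := ⟨_, rfl⟩
    obtain ⟨hdD, hdc, hadj, -⟩ := hf w hwD
    rw [hd] at hdD hdc hadj
    have hdw : d ≠ w := fun h => hwc (by rw [hd, h])
    have hadjwd : G.Adj w d := hadj hdw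
    have hdu : d ≠ u := fun h => hu (h ▸ hdD)
    set D' := insert u D with hD'
    have hsub : D ⊆ D' := Finset.subset_insert _ _
    have hssub : D ⊂ D' := Finset.ssubset_insert hu
    by_cases hex : ∃ u', u' ∈ D ∧ f u' = d ∧ u' ≠ w ∧ u' ≠ d
    · -- another leaf of d exists: make w a center with leaf u
      set f' := Function.update (Function.update f w w) u w with hf'
      have e1 : f' u = w := Function.update_self _ _ _
      have e2 : f' w = w := by
        rw [hf', Function.update_of_ne hwu, Function.update_self]
      have e3 : ∀ x, x ≠ u → x ≠ w → f' x = f x := fun x h1 h2 => by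
        rw [hf', Function.update_of_ne h1, Function.update_of_ne h2]
      refine ⟨D', f', ⟨?_, ?_⟩, hssub⟩
      · intro v hv
        simp only [hD', Finset.mem_insert, not_or] at hv
        have hvw : v ≠ w := fun h => hv.2 (h ▸ hwD)
        rw [e3 v hv.1 hvw, hid v hv.2]
      · intro v hv
        by_cases hvu : v = u
        · rw [hvu, e1]
          exact ⟨by simp [hD', hwD], by rw [e2], fun _ => hw,
            fun h => absurd h.symm huw⟩
        · by_cases hvw : v = w
          · rw [hvw, e2]
            exact ⟨by simp [hD', hwD], by rw [e2], fun h => absurd rfl h,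
              fun _ => ⟨u, by simp [hD'], e1, huw⟩⟩
          · have hvD : v ∈ D := by
              simp only [hD', Finset.mem_insert] at hv
              tauto
            obtain ⟨h1, h2, h3, h4⟩ := hf v hvD
            have hfvu : f v ≠ u := fun h => hu (h ▸ h1)
            have hfvw : f v ≠ w := fun h => hwc (by rw [← h]; exact h2)
            rw [e3 v hvu hvw]
            refine ⟨hsub h1, by rw [e3 _ hfvu hfvw]; exact h2, h3, fun h => ?_⟩
            by_cases hvd : v = d
            · obtain ⟨u', hu'D, h5, h6, h7⟩ := hex
              have h8 : u' ≠ u := fun hh => hu (hh ▸ hu'D)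
              exact ⟨u', hsub hu'D, by rw [e3 _ h8 h6, h5, hvd], by rw [hvd]; exact h7⟩
            · obtain ⟨u', hu'D, h5, h6⟩ := h4 h
              have h8 : u' ≠ u := fun hh => hu (hh ▸ hu'D)
              have h9 : u' ≠ w := fun hh => hvd (by rw [← h5, hh, hd])
              exact ⟨u', hsub hu'D, by rw [e3 _ h8 h9]; exact h5, h6⟩
    · -- w is the only leaf of d: restructure {d, w} into a star centered at w with leaf u
      push_neg at hex
      set f' := Function.update (Function.update (Function.update f d w) w w) u w with hf'
      have e1 : f' u = w := Function.update_self _ _ _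
      have e2 : f' w = w := by
        rw [hf', Function.update_of_ne hwu, Function.update_self]
      have e4 : f' d = w := by
        rw [hf', Function.update_of_ne hdu, Function.update_of_ne hdw,
          Function.update_self]
      have e3 : ∀ x, x ≠ u → x ≠ w → x ≠ d → f' x = f x := fun x h1 h2 h3 => by
        rw [hf', Function.update_of_ne h1, Function.update_of_ne h2,
          Function.update_of_ne h3]
      refine ⟨D', f', ⟨?_, ?_⟩, hssub⟩
      · intro v hv
        simp only [hD', Finset.mem_insert, not_or] at hv
        have hvw : v ≠ w := fun h => hv.2 (h ▸ hwD)
        have hvd : v ≠ d := fun h => hv.2 (h ▸ hdD)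
        rw [e3 v hv.1 hvw hvd, hid v hv.2]
      · intro v hv
        by_cases hvu : v = u
        · rw [hvu, e1]
          exact ⟨by simp [hD', hwD], by rw [e2], fun _ => hw,
            fun h => absurd h.symm huw⟩
        · by_cases hvw : v = w
          · rw [hvw, e2]
            exact ⟨by simp [hD', hwD], by rw [e2], fun h => absurd rfl h,
              fun _ => ⟨u, by simp [hD'], e1, huw⟩⟩
          · by_cases hvd : v = d
            · rw [hvd, e4]
              exact ⟨by simp [hD', hwD], by rw [e2], fun _ => hadjwd.symm,
                fun h => absurd h.symm hdw⟩
            · have hvD : v ∈ D := by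
                simp only [hD', Finset.mem_insert] at hv
                tauto
              obtain ⟨h1, h2, h3, h4⟩ := hf v hvD
              have hfvu : f v ≠ u := fun h => hu (h ▸ h1)
              have hfvw : f v ≠ w := fun h => hwc (by rw [← h]; exact h2)
              have hfvd : f v ≠ d := by
                intro h
                by_cases hvv : f v = v
                · exact hvd (by rw [← hvv, h])
                · exact hvd (hex v hvD h hvw)
              rw [e3 v hvu hvw hvd]
              refine ⟨hsub h1, by rw [e3 _ hfvu hfvw hfvd]; exact h2, h3, fun h => ?_⟩
              obtain ⟨u', hu'D, h5, h6⟩ := h4 h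
              have h8 : u' ≠ u := fun hh => hu (hh ▸ hu'D)
              have h9 : u' ≠ w := fun hh => hfvd (by rw [h, ← h5, hh, hd])
              have h10 : u' ≠ d := fun hh => hvd (by rw [← h5, hh, hdc])
              exact ⟨u', hsub hu'D, by rw [e3 _ h8 h9 h10]; exact h5, h6⟩

lemma exists_goodOn_univ (h0 : ∀ v : V, ∃ w, G.Adj v w) :
    ∃ f : V → V, GoodOn G Finset.univ f := by
  classical
  suffices h : ∀ m (D : Finset V) (f : V → V), GoodOn G D f → (Finset.univ : Finset V).card - D.card ≤ m →
      ∃ f', GoodOn G Finset.univ f' by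
    have hbase : GoodOn G (∅ : Finset V) id :=
      ⟨fun v _ => rfl, fun v hv => absurd hv (Finset.notMem_empty v)⟩
    exact h (Fintype.card V) ∅ id hbase (by simp)
  intro m
  induction m with
  | zero =>
    intro D f hgood hcard
    have : D = Finset.univ := by
      have h1 : D.card = Finset.univ.card :=
        le_antisymm (Finset.card_le_card (Finset.subset_univ D)) (by omega)
      exact Finset.eq_univ_of_card D h1
    exact ⟨f, this ▸ hgood⟩
  | succ m ih =>
    intro D f hgood hcard
    by_cases hD : D = Finset.univ
    · exact ⟨f, hD ▸ hgood⟩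
    · obtain ⟨u, hu⟩ : ∃ u, u ∉ D := by
        by_contra h
        push_neg at h
        exact hD (Finset.eq_univ_iff_forall.2 h)
      obtain ⟨w, hw⟩ := h0 u
      obtain ⟨D', f', hgood', hss⟩ := goodOn_step hgood hu hw
      refine ih D' f' hgood' ?_
      have := Finset.card_lt_card hss
      have h2 := Finset.card_le_card (Finset.subset_univ D')
      omega

section
variable (G) (n : ℕ)

def IsPath (f : V → V) (k : ℕ) (c x : ℕ → V) : Prop :=
  n + 1 ≤ (fib f (c 0)).card ∧ (∀ i ≤ k, f (c i) = c i) ∧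
  (∀ i, 1 ≤ i → i ≤ k → n ≤ (fib f (c i)).card) ∧
  (∀ i < k, x i ∈ fib f (c i) ∧ G.Adj (x i) (c (i + 1)))

def IsCfg (f : V → V) (k : ℕ) (c x : ℕ → V) (w : V) : Prop :=
  IsPath G n f k c x ∧ x k ∈ fib f (c k) ∧ G.Adj (x k) w ∧
    (f w ≠ w ∨ (fib f w).card < n)

end

lemma descent {n : ℕ} (hn : 2 ≤ n) :
    ∀ k (f : V → V) (c x : ℕ → V) (w : V), Good G f → IsCfg G n f k c x w →
    ∃ f', Good G f' ∧ excess n f' < excess n f := by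
  intro k
  induction k using Nat.strong_induction_on with
  | _ k ih =>
  intro f c x w hg hcfg
  obtain ⟨⟨hov, hctr, hmid, hstep⟩, hxk, hadjw, hterm⟩ := hcfg
  by_cases htrunc : ∃ i, 1 ≤ i ∧ i ≤ k ∧ c i = c 0
  · -- truncate the path at a repeat of `c 0`
    obtain ⟨i, hi1, hik, hci⟩ := htrunc
    refine ih (k - i) (by omega) f (fun j => c (i + j)) (fun j => x (i + j)) w hg
      ⟨⟨?_, ?_, ?_, ?_⟩, ?_, ?_, hterm⟩
    · show n + 1 ≤ (fib f (c (i + 0))).card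
      have e : i + 0 = i := by omega
      rw [e, hci]
      exact hov
    · intro j hj
      exact hctr (i + j) (by omega)
    · intro j hj1 hj2
      exact hmid (i + j) (by omega) (by omega)
    · intro j hj
      show x (i + j) ∈ fib f (c (i + j)) ∧ G.Adj (x (i + j)) (c (i + (j + 1)))
      have e : i + (j + 1) = (i + j) + 1 := by omega
      rw [e]
      exact hstep (i + j) (by omega)
    · show x (i + (k - i)) ∈ fib f (c (i + (k - i)))
      have e : i + (k - i) = k := by omega
      rw [e]
      exact hxk
    · show G.Adj (x (i + (k - i))) w
      have e : i + (k - i) = k := by omega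
      rw [e]
      exact hadjw
  · push_neg at htrunc
    have hc0 : f (c 0) = c 0 := hctr 0 (by omega)
    by_cases hk : k = 0
    · -- terminal operation at the overloaded center
      subst hk
      by_cases hwc : f w = w
      · -- w is a center with a small fiber
        have hcard : (fib f w).card < n := by
          rcases hterm with h | h
          · exact absurd hwc h
          · exact h
        exact op1 (by omega) hg hxk hov hwc hcard hadjw
      · -- w is a leaf
        have hxw : x 0 ≠ w := hadjw.ne
        by_cases hne : ((((fib f (f w)).erase w).erase (x 0))).Nonempty
        · refine op2 (by omega) hg hxk hwc hadjw hxw ?_ hne (Or.inl hov)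
          have h1 : (fib f (c 0)).card - 1 ≤ ((fib f (c 0)).erase (x 0)).card :=
            Finset.pred_card_le_card_erase
          have h2 : ((fib f (c 0)).erase (x 0)).card - 1 ≤
              (((fib f (c 0)).erase (x 0)).erase w).card := Finset.pred_card_le_card_erase
          rw [← Finset.card_pos]
          omega
        · -- the fiber of f w is exactly {w}
          rw [Finset.not_nonempty_iff_eq_empty] at hne
          have hdc0 : f w ≠ c 0 := by
            intro h
            rw [h] at hne
            have h1 : (fib f (c 0)).card - 1 ≤ ((fib f (c 0)).erase w).card :=
              Finset.pred_card_le_card_erase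
            have h2 : ((fib f (c 0)).erase w).card - 1 ≤
                (((fib f (c 0)).erase w).erase (x 0)).card := Finset.pred_card_le_card_erase
            rw [hne] at h2
            simp only [Finset.card_empty] at h2
            omega
          have hsing : fib f (f w) = {w} := by
            ext y
            simp only [Finset.mem_singleton]
            constructor
            · intro hy
              by_contra hyw
              have hyx : y ≠ x 0 := by
                intro hh
                rw [hh] at hy
                exact hdc0 ((mem_fib.1 hy).1 ▸ (mem_fib.1 hxk).1 ▸ rfl)
              have : y ∈ ((fib f (f w)).erase w).erase (x 0) :=
                Finset.mem_erase.2 ⟨hyx, Finset.mem_erase.2 ⟨hyw, hy⟩⟩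
              rw [hne] at this
              exact absurd this (Finset.notMem_empty y)
            · intro hy
              rw [hy]
              exact mem_fib.2 ⟨rfl, fun h => hwc (h ▸ rfl)⟩
          exact op3 hn hg hxk hwc hadjw hxw hov hsing
    · -- k ≥ 1
      have hk1 : 1 ≤ k := by omega
      have hck : c k ≠ c 0 := htrunc k hk1 le_rfl
      by_cases hwx : w = x 0
      · -- shortcut: w itself is a leaf of the overloaded head
        have hwfib : w ∈ fib f (c 0) := by
          rw [hwx]
          exact (hstep 0 (by omega)).1
        obtain ⟨hfw, hwc0⟩ := mem_fib.1 hwfib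
        have hwleaf : f w ≠ w := fun h => hwc0 (by rw [← hfw, h])
        have hxkw : x k ≠ w := by
          intro h
          have := fib_disjoint (f := f) hck
          rw [Finset.disjoint_left] at this
          exact this hxk (h ▸ hwfib)
        refine op2 (by omega) hg hxk hwleaf hadjw hxkw ?_ ?_ (Or.inr (by rw [hfw]; exact hov))
        · have hwn : w ∉ fib f (c k) := by
            have hdisj := fib_disjoint (f := f) hck
            rw [Finset.disjoint_left] at hdisj
            intro hmem
            exact hdisj hmem hwfib
          rw [Finset.erase_eq_of_notMem (fun hh => hwn (Finset.mem_of_mem_erase hh))]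
          have h1 : (fib f (c k)).card - 1 ≤ ((fib f (c k)).erase (x k)).card :=
            Finset.pred_card_le_card_erase
          have h3 := hmid k hk1 le_rfl
          rw [← Finset.card_pos]
          omega
        · rw [hfw]
          have h1 : (fib f (c 0)).card - 1 ≤ ((fib f (c 0)).erase w).card :=
            Finset.pred_card_le_card_erase
          have h2 : ((fib f (c 0)).erase w).card - 1 ≤
              (((fib f (c 0)).erase w).erase (x k)).card := Finset.pred_card_le_card_erase
          rw [← Finset.card_pos]
          omega
      · -- rotation : move x 0 to c 1 and recurse
        have hc1 : c 1 ≠ c 0 := htrunc 1 (by omega) hk1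
        have hx0 : x 0 ∈ fib f (c 0) := (hstep 0 (by omega)).1
        have hadj01 : G.Adj (x 0) (c 1) := (hstep 0 (by omega)).2
        obtain ⟨hfx0, hx0c⟩ := mem_fib.1 hx0
        have hc1c : f (c 1) = c 1 := hctr 1 hk1
        have hx0c1 : x 0 ≠ c 1 := by
          intro h
          rw [h] at hfx0
          exact hc1 (by rw [← hc1c, hfx0])
        set f' := Function.update f (x 0) (c 1) with hf'
        have e1 : f' (x 0) = c 1 := Function.update_self _ _ _
        have e3 : ∀ y, y ≠ x 0 → f' y = f y := fun y hy => Function.update_of_ne hy _ _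
        have hfib : ∀ v, fib f' v = if v = c 1 then insert (x 0) ((fib f v).erase (x 0))
            else (fib f v).erase (x 0) := by
          intro v
          rw [hf', fib_update]
          by_cases h : v = c 1
          · simp [h, hx0c1]
          · simp [h]
        have hfvx : ∀ v, f v ≠ x 0 := by
          intro v h
          have h2 := hg.idem v
          rw [h] at h2
          rw [hfx0] at h2
          exact hx0c h2.symm
        have hnotmem : ∀ v, v ≠ c 0 → x 0 ∉ fib f v := by
          intro v hv hmem
          have := fib_disjoint (f := f) hv
          rw [Finset.disjoint_left] at this
          exact this hmem hx0
        have hfib_other : ∀ v, v ≠ c 0 → v ≠ c 1 → fib f' v = fib f v := by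
          intro v h0 h1
          rw [hfib v, if_neg h1, Finset.erase_eq_of_notMem (hnotmem v h0)]
        have hfib1 : fib f' (c 1) = insert (x 0) (fib f (c 1)) := by
          rw [hfib, if_pos rfl, Finset.erase_eq_of_notMem (hnotmem (c 1) hc1)]
        have hcard1 : (fib f' (c 1)).card = (fib f (c 1)).card + 1 := by
          rw [hfib1, Finset.card_insert_of_notMem (hnotmem (c 1) hc1)]
        have hfib0 : fib f' (c 0) = (fib f (c 0)).erase (x 0) := by
          rw [hfib, if_neg hc1.symm]
        have hcard0 : (fib f' (c 0)).card = (fib f (c 0)).card - 1 := by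
          rw [hfib0, Finset.card_erase_of_mem hx0]
        have hg' : Good G f' := by
          intro v
          by_cases hvx : v = x 0
          · rw [hvx, e1]
            exact ⟨by rw [e3 _ hx0c1.symm, hc1c], fun _ => hadj01, fun h => absurd h.symm hx0c1⟩
          · rw [e3 v hvx]
            obtain ⟨h1, h2, h3⟩ := hg v
            refine ⟨by rw [e3 _ (hfvx v)]; exact h1, h2, fun h => ?_⟩
            by_cases hvc0 : v = c 0
            · have h5 : 0 < ((fib f (c 0)).erase (x 0)).card := by
                rw [Finset.card_erase_of_mem hx0]
                omega
              obtain ⟨y, hy⟩ := Finset.card_pos.1 h5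
              have hyx : y ≠ x 0 := (Finset.mem_erase.1 hy).1
              obtain ⟨hy1, hy2⟩ := mem_fib.1 (Finset.mem_of_mem_erase hy)
              exact ⟨y, by rw [e3 y hyx, hy1, hvc0], by rw [hvc0]; exact hy2⟩
            · obtain ⟨u', h5, h6⟩ := h3 h
              have hu'x : u' ≠ x 0 := by
                intro hh
                rw [hh] at h5
                exact hvc0 (by rw [← h5, hfx0])
              exact ⟨u', by rw [e3 u' hu'x]; exact h5, h6⟩
        have hmid1 : n ≤ (fib f (c 1)).card := hmid 1 (by omega) hk1
        have hexq : excess n f' = excess n f := by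
          have key : ∀ v ∈ (Finset.univ : Finset V),
              ((fib f' v).card - n) + (if v = c 0 then 1 else 0)
                = ((fib f v).card - n) + (if v = c 1 then 1 else 0) := by
            intro v _
            by_cases h0 : v = c 0
            · rw [h0, if_pos rfl, if_neg (show ¬ c 0 = c 1 from fun h => hc1 h.symm), hcard0]
              omega
            · by_cases h1 : v = c 1
              · rw [h1, if_neg (show ¬ c 1 = c 0 from hc1), if_pos rfl, hcard1]
                omega
              · rw [if_neg h0, if_neg h1, hfib_other v h0 h1]
          have h1 := Finset.sum_congr rfl key
          rw [Finset.sum_add_distrib, Finset.sum_add_distrib,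
            Finset.sum_ite_eq' Finset.univ (c 0) (fun _ => 1),
            Finset.sum_ite_eq' Finset.univ (c 1) (fun _ => 1)] at h1
          simp only [Finset.mem_univ, if_pos] at h1
          unfold excess
          omega
        have hcx : ∀ i, i ≤ k → c i ≠ x 0 := by
          intro i hi h
          have h2 := hctr i hi
          rw [h] at h2
          rw [hfx0] at h2
          exact hx0c h2.symm
        have hxne : ∀ i, i ≤ k → c i ≠ c 0 → x i ∈ fib f (c i) → x i ≠ x 0 := by
          intro i hi hci hmem h
          have hdisj := fib_disjoint (f := f) hci
          rw [Finset.disjoint_left] at hdisj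
          exact hdisj hmem (h ▸ hx0)
        have hmempres : ∀ i, i ≤ k → c i ≠ c 0 → x i ∈ fib f (c i) → x i ∈ fib f' (c i) := by
          intro i hi hci hmem
          obtain ⟨hm1, hm2⟩ := mem_fib.1 hmem
          exact mem_fib.2 ⟨by rw [e3 _ (hxne i hi hci hmem)]; exact hm1, hm2⟩
        have ek : k - 1 + 1 = k := by omega
        have hcfg' : IsCfg G n f' (k - 1) (fun j => c (j + 1)) (fun j => x (j + 1)) w := by
          refine ⟨⟨?_, ?_, ?_, ?_⟩, ?_, ?_, ?_⟩
          · show n + 1 ≤ (fib f' (c (0 + 1))).card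
            rw [show (0 : ℕ) + 1 = 1 from rfl, hcard1]
            omega
          · intro j hj
            show f' (c (j + 1)) = c (j + 1)
            rw [e3 _ (hcx (j + 1) (by omega))]
            exact hctr (j + 1) (by omega)
          · intro j hj1 hj2
            show n ≤ (fib f' (c (j + 1))).card
            by_cases h : c (j + 1) = c 1
            · rw [h, hcard1]
              omega
            · rw [hfib_other _ (htrunc (j + 1) (by omega) (by omega)) h]
              exact hmid (j + 1) (by omega) (by omega)
          · intro j hj
            show x (j + 1) ∈ fib f' (c (j + 1)) ∧ G.Adj (x (j + 1)) (c (j + 1 + 1))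
            refine ⟨hmempres (j + 1) (by omega) (htrunc (j + 1) (by omega) (by omega))
              (hstep (j + 1) (by omega)).1, (hstep (j + 1) (by omega)).2⟩
          · show x (k - 1 + 1) ∈ fib f' (c (k - 1 + 1))
            rw [ek]
            exact hmempres k le_rfl hck hxk
          · show G.Adj (x (k - 1 + 1)) w
            rw [ek]
            exact hadjw
          · rcases hterm with h | h
            · exact Or.inl (by rw [e3 w hwx]; exact h)
            · refine Or.inr ?_
              have hw0 : w ≠ c 0 := by
                intro hh
                rw [hh] at h
                omega
              have hw1 : w ≠ c 1 := by
                intro hh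
                rw [hh] at h
                omega
              rw [hfib_other w hw0 hw1]
              exact h
        obtain ⟨f'', hg'', hlt⟩ := ih (k - 1) (by omega) f' _ _ w hg' hcfg'
        exact ⟨f'', hg'', by rw [← hexq]; exact hlt⟩

/-- If there is no configuration but the excess is positive, the isolated-vertices
condition is violated. -/
lemma no_cfg_contra {n : ℕ} (hn : 2 ≤ n)
    (hcond : ∀ S : Finset V, (isoF G S).card ≤ n * S.card)
    {f : V → V} (hg : Good G f) (hex : excess n f ≠ 0)
    (hnocfg : ∀ k c x w, ¬ IsCfg G n f k c x w) : False := by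
  classical
  -- an overloaded center exists
  obtain ⟨c₀, hc₀⟩ : ∃ v, n + 1 ≤ (fib f v).card := by
    by_contra h
    push_neg at h
    exact hex (Finset.sum_eq_zero (fun v _ => by have := h v; omega))
  have hc₀c : f c₀ = c₀ := by
    have : 0 < (fib f c₀).card := by omega
    obtain ⟨y, hy⟩ := Finset.card_pos.1 this
    exact hg.center_of_mem_fib hy
  set Reach : V → Prop := fun v => ∃ (k : ℕ) (c x : ℕ → V), IsPath G n f k c x ∧ c k = v with hReach
  have hreach₀ : Reach c₀ :=
    ⟨0, fun _ => c₀, fun _ => c₀,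
      ⟨hc₀, fun i _ => hc₀c, fun i hi1 hi2 => by omega, fun i hi => by omega⟩, rfl⟩
  have hRcen : ∀ v, Reach v → f v = v := by
    rintro v ⟨k, c, x, ⟨h1, h2, h3, h4⟩, rfl⟩
    exact h2 k le_rfl
  have hRcard : ∀ v, Reach v → n ≤ (fib f v).card := by
    rintro v ⟨k, c, x, ⟨h1, h2, h3, h4⟩, rfl⟩
    by_cases hk : k = 0
    · subst hk
      omega
    · exact h3 k (by omega) le_rfl
  -- closure property
  have hclose : ∀ v, Reach v → ∀ u ∈ fib f v, ∀ t, G.Adj u t → Reach t := by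
    rintro v ⟨k, c, x, ⟨h1, h2, h3, h4⟩, rfl⟩ u hu t hadj
    by_cases hterm : f t ≠ t ∨ (fib f t).card < n
    · exact absurd ⟨⟨h1, h2, h3, fun i hi => ⟨by
        simp only [if_neg (Nat.ne_of_lt hi)]
        exact (h4 i hi).1, by
        simp only [if_neg (Nat.ne_of_lt hi)]
        exact (h4 i hi).2⟩⟩, by simpa using hu, by simpa using hadj, hterm⟩
        (hnocfg k c (fun i => if i = k then u else x i) t)
    · push_neg at hterm
      refine ⟨k + 1, fun i => if i ≤ k then c i else t, fun i => if i = k then u else x i,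
        ⟨?_, ?_, ?_, ?_⟩, ?_⟩
      · simpa using h1
      · intro i hi
        by_cases h : i ≤ k
        · simpa [h] using h2 i h
        · simp only [if_neg h]
          exact hterm.1
      · intro i hi1 hi2
        by_cases h : i ≤ k
        · simpa [h] using h3 i hi1 h
        · simp only [if_neg h]
          exact hterm.2
      · intro i hi
        by_cases h : i = k
        · subst h
          simp only [if_pos rfl, if_pos (le_refl i), if_neg (by omega : ¬ i + 1 ≤ i)]
          exact ⟨hu, hadj⟩
        · have hik : i < k := by omega
          simp only [if_neg h, if_pos (by omega : i ≤ k), if_pos (by omega : i + 1 ≤ k)]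
          exact h4 i hik
      · simp
  -- the set of reached centers violates the condition
  set S : Finset V := Finset.univ.filter (fun v => Reach v) with hS
  have hmemS : ∀ v, v ∈ S ↔ Reach v := by
    intro v
    simp [hS]
  have hXsub : S.biUnion (fib f) ⊆ isoF G S := by
    intro u hu
    rw [Finset.mem_biUnion] at hu
    obtain ⟨v, hv, huv⟩ := hu
    rw [mem_isoF]
    refine ⟨?_, ?_⟩
    · intro huS
      have hcen := hRcen u ((hmemS u).1 huS)
      obtain ⟨h1, h2⟩ := mem_fib.1 huv
      exact h2 (by rw [← h1, hcen])
    · intro t hadj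
      exact (hmemS t).2 (hclose v ((hmemS v).1 hv) u huv t hadj)
  have hcards : n * S.card < (S.biUnion (fib f)).card := by
    rw [Finset.card_biUnion (fun a ha b hb hab => fib_disjoint hab)]
    calc n * S.card = ∑ _v ∈ S, n := by rw [Finset.sum_const, smul_eq_mul, mul_comm]
    _ < ∑ v ∈ S, (fib f v).card := by
        refine Finset.sum_lt_sum (fun v hv => hRcard v ((hmemS v).1 hv)) ⟨c₀, ?_, ?_⟩
        · exact (hmemS c₀).2 hreach₀
        · omega
  have := hcond S
  have hle := Finset.card_le_card hXsub
  omega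

lemma exists_good_zero {n : ℕ} (hn : 2 ≤ n)
    (hcond : ∀ S : Finset V, (isoF G S).card ≤ n * S.card)
    (h0 : ∀ v : V, ∃ w, G.Adj v w) :
    ∃ f, Good G f ∧ excess n f = 0 := by
  classical
  obtain ⟨f₀, hf₀⟩ := exists_goodOn_univ (G := G) h0
  have hg₀ : Good G f₀ := by
    intro v
    obtain ⟨h1, h2, h3, h4⟩ := hf₀.2 v (Finset.mem_univ v)
    exact ⟨h2, h3, fun h => by
      obtain ⟨u, _, hu⟩ := h4 h
      exact ⟨u, hu⟩⟩
  suffices hh : ∀ e (f : V → V), Good G f → excess n f ≤ e → ∃ f', Good G f' ∧ excess n f' = 0 by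
    exact hh (excess n f₀) f₀ hg₀ le_rfl
  intro e
  induction e with
  | zero =>
    intro f hf hle
    exact ⟨f, hf, by omega⟩
  | succ e ihe =>
    intro f hf hle
    by_cases hz : excess n f = 0
    · exact ⟨f, hf, hz⟩
    · by_cases hcfg : ∃ k c x w, IsCfg G n f k c x w
      · obtain ⟨k, c, x, w, hc⟩ := hcfg
        obtain ⟨f', hg', hlt⟩ := descent hn k f c x w hf hc
        exact ihe f' hg' (by omega)
      · push_neg at hcfg
        exact absurd (no_cfg_contra hn hcond hf hz hcfg) (fun h => h)



lemma final_graph {n : ℕ} (hn : 2 ≤ n) {f : V → V} (hg : Good G f) (hz : excess n f = 0) :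
    ∃ F : SimpleGraph V, F ≤ G ∧ ∀ v, IsStarAtMostComp F n v := by
  classical
  set F : SimpleGraph V := SimpleGraph.fromRel (fun a b => f a = b) with hF
  have hAdj : ∀ a b, F.Adj a b ↔ a ≠ b ∧ (f a = b ∨ f b = a) := by
    intro a b
    rw [hF]
    rfl
  have hFG : F ≤ G := by
    intro a b hab
    rw [hAdj] at hab
    obtain ⟨hne, h | h⟩ := hab
    · have : f a ≠ a := fun hh => hne (show a = b by rw [← h, hh])
      have := hg.adj this
      rwa [h] at this
    · have : f b ≠ b := fun hh => hne (show b = a by rw [← h, hh]).symm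
      have := hg.adj this
      rw [h] at this
      exact this.symm
  have hNcen : ∀ v, f v = v → F.neighborSet v = ↑(fib f v) := by
    intro v hv
    ext b
    simp only [SimpleGraph.mem_neighborSet, hAdj, Finset.coe_sort_coe, Finset.mem_coe, mem_fib]
    constructor
    · rintro ⟨hne, h | h⟩
      · exact absurd (show v = b by rw [← h, hv]) hne
      · exact ⟨h, fun hh => hne hh.symm⟩
    · rintro ⟨h1, h2⟩
      exact ⟨fun hh => h2 hh.symm, Or.inr h1⟩
  have hNleaf : ∀ v, f v ≠ v → F.neighborSet v = {f v} := by
    intro v hv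
    ext b
    simp only [SimpleGraph.mem_neighborSet, hAdj, Set.mem_singleton_iff]
    constructor
    · rintro ⟨hne, h | h⟩
      · exact h.symm
      · exfalso
        have := hg.idem b
        rw [h] at this
        exact hv this
    · rintro rfl
      exact ⟨fun hh => hv hh.symm, Or.inl rfl⟩
  have hdegcen : ∀ v, f v = v → deg F v = (fib f v).card := by
    intro v hv
    rw [deg, hNcen v hv, Set.ncard_coe_finset]
  have hdegleaf : ∀ v, f v ≠ v → deg F v = 1 := by
    intro v hv
    rw [deg, hNleaf v hv, Set.ncard_singleton]
  have hcard_le : ∀ v, (fib f v).card ≤ n := by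
    intro v
    have := (Finset.sum_eq_zero_iff.1 hz) v (Finset.mem_univ v)
    omega
  have hstarcen : ∀ v, f v = v → 0 < deg F v ∧ deg F v ≤ n ∧
      ∀ w, F.Adj v w → deg F w = 1 := by
    intro v hv
    have hne : (fib f v).Nonempty := by
      obtain ⟨u, hu1, hu2⟩ := (hg v).2.2 hv
      exact ⟨u, mem_fib.2 ⟨hu1, hu2⟩⟩
    refine ⟨by rw [hdegcen v hv]; exact Finset.card_pos.2 hne,
      by rw [hdegcen v hv]; exact hcard_le v, ?_⟩
    intro w hw
    have : w ∈ fib f v := by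
      have := hNcen v hv
      have hmem : w ∈ F.neighborSet v := hw
      rw [this] at hmem
      exact hmem
    obtain ⟨h1, h2⟩ := mem_fib.1 this
    exact hdegleaf w (fun hh => h2 (by rw [← h1, hh]))
  refine ⟨F, hFG, ?_⟩
  intro v
  by_cases hv : f v = v
  · obtain ⟨h1, h2, h3⟩ := hstarcen v hv
    exact ⟨v, Or.inl rfl, h1, h2, h3⟩
  · have hcc : f (f v) = f v := hg.idem v
    obtain ⟨h1, h2, h3⟩ := hstarcen (f v) hcc
    refine ⟨f v, Or.inr ?_, h1, h2, h3⟩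
    rw [hAdj]
    exact ⟨hv, Or.inr rfl⟩

end StarFactorProof

open StarFactorProof

/-- for `n ≥ 2`, `G` has a `{K_{1,1}, …, K_{1,n}}`-factor iff
`iso(G-S) ≤ n|S|` for all `S`. -/
theorem stmt4 {V : Type*} [Fintype V] (G : SimpleGraph V) (n : ℕ) (hn : 2 ≤ n) :
    (∃ F, F ≤ G ∧ ∀ v, IsStarAtMostComp F n v) ↔
      ∀ S : Set V, iso G S ≤ n * S.ncard := by
  classical
  constructor
  · rintro ⟨F, hFG, hstar⟩ S
    have hdeg : ∀ v, deg F v ≤ n := by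
      intro v
      obtain ⟨c, hc, hpos, hle, hleaf⟩ := hstar v
      rcases hc with rfl | hadj
      · exact hle
      · rw [hleaf v hadj]
        omega
    have hnbr : ∀ v, ∃ w, F.Adj v w := by
      intro v
      obtain ⟨c, hc, hpos, hle, hleaf⟩ := hstar v
      rcases hc with rfl | hadj
      · have hne : (F.neighborSet v).Nonempty := by
          rw [← Set.ncard_pos (Set.toFinite _)]
          exact hpos
        obtain ⟨w, hw⟩ := hne
        exact ⟨w, hw⟩
      · exact ⟨c, hadj.symm⟩
    set isoSet := {v | v ∉ S ∧ ∀ w, G.Adj v w → w ∈ S} with hisoSet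
    have hfin1 : isoSet.Finite := Set.toFinite _
    have hfinS : S.Finite := Set.toFinite _
    have hsub : hfin1.toFinset ⊆ hfinS.toFinset.biUnion
        (fun s => (Set.toFinite (F.neighborSet s)).toFinset) := by
      intro v hv
      rw [Set.Finite.mem_toFinset] at hv
      obtain ⟨w, hw⟩ := hnbr v
      have hwS : w ∈ S := hv.2 w (hFG hw)
      rw [Finset.mem_biUnion]
      exact ⟨w, by rwa [Set.Finite.mem_toFinset], by
        rw [Set.Finite.mem_toFinset]
        exact hw.symm⟩
    have hcard := Finset.card_le_card hsub
    have hcard2 := Finset.card_biUnion_le (s := hfinS.toFinset)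
      (t := fun s => (Set.toFinite (F.neighborSet s)).toFinset)
    have hsum : ∑ s ∈ hfinS.toFinset, ((Set.toFinite (F.neighborSet s)).toFinset).card
        ≤ ∑ _s ∈ hfinS.toFinset, n := by
      refine Finset.sum_le_sum (fun s _ => ?_)
      have := hdeg s
      rwa [deg, Set.ncard_eq_toFinset_card _ (Set.toFinite _)] at this
    rw [iso, Set.ncard_eq_toFinset_card _ hfin1, Set.ncard_eq_toFinset_card _ hfinS]
    rw [Finset.sum_const, smul_eq_mul, mul_comm] at hsum
    omega
  · intro hcond
    have hcondF : ∀ S : Finset V, (isoF G S).card ≤ n * S.card := by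
      intro S
      have h := hcond (↑S : Set V)
      have he : {v | v ∉ (↑S : Set V) ∧ ∀ w, G.Adj v w → w ∈ (↑S : Set V)}
          = ↑(isoF G S) := by
        ext v
        simp [mem_isoF]
      rw [iso, he, Set.ncard_coe_finset, Set.ncard_coe_finset] at h
      exact h
    have h0 : ∀ v : V, ∃ w, G.Adj v w := by
      intro v
      by_contra h
      push_neg at h
      have h1 := hcondF ∅
      have hv : v ∈ isoF G ∅ := mem_isoF.2 ⟨Finset.notMem_empty v,
        fun u hu => absurd hu (h u)⟩
      have h2 : 0 < (isoF G ∅).card := Finset.card_pos.2 ⟨v, hv⟩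
      simp only [Finset.card_empty, Nat.mul_zero] at h1
      omega
    obtain ⟨f, hg, hz⟩ := exists_good_zero hn hcondF h0
    exact final_graph hn hg hz
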